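/- With Φ and Φ̃ as above, if additionally each c_i = p_i ≥ 0 with ∑ p_i = 1, then for every n-qubit state ρ: Tr_anc[((X − iY) ⊗ 1) · Φ̃(|+⟩⟨+| ⊗ ρ)] = Φ(ρ), where X, Y are Pauli operators on the ancilla qubit and |+⟩ = (|0⟩+|1⟩)/√2. -/

import Mathlib

open Matrix
open scoped Kronecker ComplexOrder

variable {d : ℕ}

/-- The controlled unitary `W = |0⟩⟨0| ⊗ U + |1⟩⟨1| ⊗ V`. -/
def ctrlW (U V : Matrix (Fin d) (Fin d) ℂ) : Matrix (Fin 2 × Fin d) (Fin 2 × Fin d) ℂ :=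
  fun p q => if p.1 = q.1 then (if p.1 = 0 then U p.2 q.2 else V p.2 q.2) else 0

def pauliX : Matrix (Fin 2) (Fin 2) ℂ := !![0, 1; 1, 0]

def pauliY : Matrix (Fin 2) (Fin 2) ℂ := !![0, -Complex.I; Complex.I, 0]

noncomputable def plusState : Matrix (Fin 2) (Fin 2) ℂ := (1/2 : ℂ) • !![1, 1; 1, 1]

/-- Partial trace over the ancilla qubit. -/
noncomputable def ptraceAnc (C : Matrix (Fin 2 × Fin d) (Fin 2 × Fin d) ℂ) : Matrix (Fin d) (Fin d) ℂ :=
  fun a b => ∑ j : Fin 2, C (j, a) (j, b)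

lemma Wmul {d : ℕ} (U V : Matrix (Fin d) (Fin d) ℂ)
    (A : Matrix (Fin 2 × Fin d) (Fin 2 × Fin d) ℂ) (a : Fin d) (q : Fin 2 × Fin d) :
    (ctrlW U V * A) ((0 : Fin 2), a) q = ∑ c, U a c * A (0, c) q := by
  simp [mul_apply, ctrlW, Fintype.sum_prod_type, Fin.sum_univ_two]

lemma mulWH {d : ℕ} (U V : Matrix (Fin d) (Fin d) ℂ)
    (A : Matrix (Fin 2 × Fin d) (Fin 2 × Fin d) ℂ) (b : Fin d) (q : Fin 2 × Fin d) :
    (A * (ctrlW U V)ᴴ) q ((1 : Fin 2), b) = ∑ e, A q (1, e) * (starRingEnd ℂ) (V b e) := by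
  simp [mul_apply, ctrlW, conjTranspose_apply, Fintype.sum_prod_type, Fin.sum_univ_two]

lemma Mentry {d : ℕ} (U V ρ : Matrix (Fin d) (Fin d) ℂ) (a b : Fin d) :
    (ctrlW U V * (plusState ⊗ₖ ρ) * (ctrlW U V)ᴴ) ((0 : Fin 2), a) ((1 : Fin 2), b)
      = (1/2 : ℂ) * (U * ρ * Vᴴ) a b := by
  have hr : (U * ρ * Vᴴ) a b = ∑ c, ∑ e, U a c * ρ c e * (starRingEnd ℂ) (V b e) := by
    simp only [Matrix.mul_apply, conjTranspose_apply, Finset.sum_mul]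
    rw [Finset.sum_comm]
    rfl
  rw [Matrix.mul_assoc, Wmul, hr]
  simp only [mulWH, kroneckerMap_apply, plusState, Matrix.smul_apply, smul_eq_mul,
    Matrix.cons_val_one, Matrix.cons_val_zero, Matrix.head_cons, one_mul]
  rw [Finset.mul_sum]
  refine Finset.sum_congr rfl fun c _ => ?_
  rw [Finset.mul_sum, Finset.mul_sum]
  refine Finset.sum_congr rfl fun e _ => ?_
  have h11 : (!![(1:ℂ),1;1,1] : Matrix (Fin 2) (Fin 2) ℂ) 0 1 = 1 := by norm_num
  rw [h11]
  ring

lemma single {d : ℕ} (U V ρ : Matrix (Fin d) (Fin d) ℂ) :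
    ptraceAnc (((pauliX - Complex.I • pauliY) ⊗ₖ (1 : Matrix (Fin d) (Fin d) ℂ))
        * (ctrlW U V * (plusState ⊗ₖ ρ) * (ctrlW U V)ᴴ)) = U * ρ * Vᴴ := by
  ext a b
  have h : ∀ j : Fin 2, (((pauliX - Complex.I • pauliY) ⊗ₖ (1 : Matrix (Fin d) (Fin d) ℂ))
        * (ctrlW U V * (plusState ⊗ₖ ρ) * (ctrlW U V)ᴴ)) (j, a) (j, b)
      = (if j = 1 then (2:ℂ) * (ctrlW U V * (plusState ⊗ₖ ρ) * (ctrlW U V)ᴴ) ((0:Fin 2), a) ((1:Fin 2), b) else 0) := by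
    intro j
    rw [mul_apply]
    rw [Fintype.sum_prod_type]
    simp only [kroneckerMap_apply, Matrix.sub_apply, Matrix.smul_apply, one_apply, smul_eq_mul,
      mul_ite, mul_one, mul_zero, ite_mul, zero_mul]
    fin_cases j <;>
      simp [pauliX, pauliY, Fin.sum_univ_two, Finset.sum_ite_eq, two_mul] <;> ring
  simp only [ptraceAnc, h, Fin.sum_univ_two]
  simp only [Mentry]
  simp

/-- Measuring `X − iY` on the ancilla of the controlled dilation recovers
`Φ(ρ) = ∑ᵢ pᵢ Uᵢ ρ Vᵢ†`: `Tr_anc[((X−iY)⊗1)·Φ̃(|+⟩⟨+|⊗ρ)] = Φ(ρ)`. -/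
theorem generalized_hadamard_test {d m : ℕ}
    (p : Fin m → ℝ) (hp : ∀ i, 0 ≤ p i) (hpsum : ∑ i, p i = 1)
    (U V : Fin m → Matrix (Fin d) (Fin d) ℂ)
    (hU : ∀ i, (U i)ᴴ * U i = 1 ∧ U i * (U i)ᴴ = 1)
    (hV : ∀ i, (V i)ᴴ * V i = 1 ∧ V i * (V i)ᴴ = 1)
    (ρ : Matrix (Fin d) (Fin d) ℂ) (hρ : ρ.PosSemidef) (hρtr : ρ.trace = 1) :
    ptraceAnc (((pauliX - Complex.I • pauliY) ⊗ₖ (1 : Matrix (Fin d) (Fin d) ℂ))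
        * (∑ i, (p i : ℂ) •
            (ctrlW (U i) (V i) * (plusState ⊗ₖ ρ) * (ctrlW (U i) (V i))ᴴ)))
      = ∑ i, (p i : ℂ) • (U i * ρ * (V i)ᴴ) := by
  ext a b
  rw [Matrix.mul_sum]
  simp only [mul_smul_comm, ptraceAnc, Finset.sum_apply, Matrix.sum_apply,
    Matrix.smul_apply, smul_eq_mul]
  rw [Finset.sum_comm]
  refine Finset.sum_congr rfl fun i _ => ?_
  rw [← Finset.mul_sum]
  congr 1
  have := congrFun (congrFun (single (U i) (V i) ρ) a) b
  simpa [ptraceAnc] using this
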